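/- Let m ≥ 2 and take the S4D-Lin initialization v_j = π·j for j = 1, …, m, with w_j = −1/2 + i·v_j, and let G ∈ ℝ^{m×m} be the Gram matrix G_{j,k} = ∫₀^∞ Re(e^{w_j s}) Re(e^{w_k s}) ds. Then 0.2 < λ_min(G) ≤ λ_max(G) < √2; in particular the condition number λ_max(G)/λ_min(G) is bounded above uniformly in m. -/

import Mathlib

open MeasureTheory Real

section Aux

open Set Filter

private lemma expcos_integrable' (ω : ℝ) :
    IntegrableOn (fun s : ℝ => Real.exp (-s) * Real.cos (ω * s)) (Ioi (0:ℝ)) := by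
  apply Integrable.mono (exp_neg_integrableOn_Ioi 0 one_pos)
  · exact (Continuous.mul (by continuity) (by continuity)).aestronglyMeasurable
  · filter_upwards with s
    simp only [norm_mul, Real.norm_eq_abs, Real.abs_exp, one_mul, neg_mul]
    calc Real.exp (-s) * |Real.cos (ω*s)| ≤ Real.exp (-s) * 1 :=
          mul_le_mul_of_nonneg_left (abs_cos_le_one _) (Real.exp_pos _).le
      _ = Real.exp (-s) := mul_one _

private lemma expcos_integral' (ω : ℝ) :
    ∫ s in Ioi (0:ℝ), Real.exp (-s) * Real.cos (ω * s) = 1 / (1 + ω^2) := by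
  have h1 : (0:ℝ) < 1 + ω^2 := by positivity
  set F : ℝ → ℝ := fun s => Real.exp (-s) * (ω * Real.sin (ω*s) - Real.cos (ω*s)) / (1+ω^2)
    with hF
  have hderiv : ∀ x ∈ Ici (0:ℝ), HasDerivAt F (Real.exp (-x) * Real.cos (ω*x)) x := by
    intro x _
    have h2 : HasDerivAt (fun s : ℝ => Real.exp (-s)) (-Real.exp (-x)) x := by
      simpa using ((hasDerivAt_neg x).exp)
    have h3 : HasDerivAt (fun s : ℝ => ω * Real.sin (ω*s) - Real.cos (ω*s))
        (ω * (Real.cos (ω*x) * ω) - (-Real.sin (ω*x) * ω)) x := by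
      have hs : HasDerivAt (fun s : ℝ => Real.sin (ω*s)) (Real.cos (ω*x) * ω) x := by
        have := (Real.hasDerivAt_sin (ω*x)).comp x ((hasDerivAt_id x).const_mul ω)
        simp only [mul_one] at this
        exact this
      have hc : HasDerivAt (fun s : ℝ => Real.cos (ω*s)) (-Real.sin (ω*x) * ω) x := by
        have := (Real.hasDerivAt_cos (ω*x)).comp x ((hasDerivAt_id x).const_mul ω)
        simp only [mul_one, neg_mul] at this ⊢
        exact this
      exact (hs.const_mul ω).sub hc
    have := (h2.mul h3).div_const (1+ω^2)
    refine this.congr_deriv ?_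
    field_simp
    ring
  have htend : Tendsto F atTop (nhds 0) := by
    apply squeeze_zero_norm (a := fun s => Real.exp (-s) * (|ω| + 1) / (1+ω^2)) (f := F)
    · intro s
      rw [hF]
      simp only [norm_div, Real.norm_eq_abs, norm_mul, Real.abs_exp, abs_of_pos h1]
      gcongr
      calc |ω * Real.sin (ω*s) - Real.cos (ω*s)|
          ≤ |ω * Real.sin (ω*s)| + |Real.cos (ω*s)| := abs_sub _ _
        _ ≤ |ω| * 1 + 1 := by
            rw [abs_mul]
            exact add_le_add (mul_le_mul_of_nonneg_left (abs_sin_le_one _) (abs_nonneg _))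
              (abs_cos_le_one _)
        _ = |ω| + 1 := by ring
    · have : Tendsto (fun s:ℝ => Real.exp (-s)) atTop (nhds 0) :=
        Real.tendsto_exp_neg_atTop_nhds_zero
      simpa using (this.mul_const (|ω|+1)).div_const (1+ω^2)
  have := integral_Ioi_of_hasDerivAt_of_tendsto' hderiv (expcos_integrable' ω) htend
  rw [this, hF]
  simp only [neg_zero, mul_zero, Real.exp_zero, Real.sin_zero, Real.cos_zero, mul_zero, one_mul, zero_sub]
  field_simp

private lemma gram_integral' (a b : ℝ) :
    (∫ s in Ioi (0:ℝ),
      (Complex.exp (((-(1/2) : ℝ) + (a : ℂ) * Complex.I) * (s : ℂ))).re *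
      (Complex.exp (((-(1/2) : ℝ) + (b : ℂ) * Complex.I) * (s : ℂ))).re)
    = 1/2 * (1/(1+(a-b)^2)) + 1/2 * (1/(1+(a+b)^2)) := by
  have hre : ∀ (c : ℝ) (s : ℝ),
      (Complex.exp (((-(1/2) : ℝ) + (c : ℂ) * Complex.I) * (s : ℂ))).re
      = Real.exp (-(1/2)*s) * Real.cos (c*s) := by
    intro c s
    rw [Complex.exp_re]
    congr 2
    · simp [Complex.add_re, Complex.mul_re]
    · simp [Complex.add_im, Complex.mul_im]
  have hpt : ∀ s : ℝ,
      (Complex.exp (((-(1/2) : ℝ) + (a : ℂ) * Complex.I) * (s : ℂ))).re *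
      (Complex.exp (((-(1/2) : ℝ) + (b : ℂ) * Complex.I) * (s : ℂ))).re
      = 1/2 * (Real.exp (-s) * Real.cos ((a-b)*s)) + 1/2 * (Real.exp (-s) * Real.cos ((a+b)*s)) := by
    intro s
    rw [hre a s, hre b s]
    have he : Real.exp (-(1/2)*s) * Real.exp (-(1/2)*s) = Real.exp (-s) := by
      rw [← Real.exp_add]; ring_nf
    have hcc := Real.two_mul_cos_mul_cos (a*s) (b*s)
    have h1 : a*s - b*s = (a-b)*s := by ring
    have h2 : a*s + b*s = (a+b)*s := by ring
    rw [h1, h2] at hcc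
    calc rexp (-(1/2)*s) * Real.cos (a*s) * (rexp (-(1/2)*s) * Real.cos (b*s))
        = (rexp (-(1/2)*s) * rexp (-(1/2)*s)) * (Real.cos (a*s) * Real.cos (b*s)) := by ring
      _ = rexp (-s) * ((Real.cos ((a-b)*s) + Real.cos ((a+b)*s))/2) := by
          rw [he]; rw [show Real.cos (a*s) * Real.cos (b*s)
            = (Real.cos ((a-b)*s) + Real.cos ((a+b)*s))/2 by linarith [hcc]]
      _ = 1/2 * (rexp (-s) * Real.cos ((a-b)*s)) + 1/2 * (rexp (-s) * Real.cos ((a+b)*s)) := by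
          ring
  rw [MeasureTheory.integral_congr_ae (Filter.Eventually.of_forall hpt)]
  rw [MeasureTheory.integral_add ((expcos_integrable' (a-b)).const_mul _)
    ((expcos_integrable' (a+b)).const_mul _)]
  rw [integral_const_mul, integral_const_mul, expcos_integral', expcos_integral']

private lemma tele_sum' (n : ℕ) :
    ∑ i ∈ Finset.range n, (1/((i:ℝ)+1) - 1/((i:ℝ)+2)) ≤ 1 := by
  have := Finset.sum_range_sub' (fun i : ℕ => 1/((i:ℝ)+1)) n
  have heq : ∀ i : ℕ, (1/((i:ℝ)+1) - 1/((i:ℝ)+2))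
      = (fun i : ℕ => 1/((i:ℝ)+1)) i - (fun i : ℕ => 1/((i:ℝ)+1)) (i+1) := by
    intro i; push_cast; ring_nf
  rw [Finset.sum_congr rfl (fun i _ => heq i), this]
  have : (0:ℝ) ≤ 1/((n:ℝ)+1) := by positivity
  norm_num
  linarith

private lemma tele' (c : ℝ) (hc : 1 ≤ c) (n : ℕ) :
    ∑ i ∈ Finset.range n, 1/(1+c*((1+i : ℕ):ℝ)^2) ≤ 1/(1+c) + 1/c := by
  have hc0 : (0:ℝ) < c := lt_of_lt_of_le one_pos hc
  have hc1 : (0:ℝ) < 1 + c := by linarith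
  cases n with
  | zero => simp; positivity
  | succ n =>
    rw [Finset.sum_range_succ']
    have h1 : ∑ i ∈ Finset.range n, 1/(1+c*((1+(i+1) : ℕ):ℝ)^2)
        ≤ ∑ i ∈ Finset.range n, (1/c) * (1/((i:ℝ)+1) - 1/((i:ℝ)+2)) := by
      apply Finset.sum_le_sum
      intro i _
      have hi : (0:ℝ) < (i:ℝ)+1 := by positivity
      have hi2 : (0:ℝ) < (i:ℝ)+2 := by positivity
      have heq : (1/c) * (1/((i:ℝ)+1) - 1/((i:ℝ)+2)) = 1/(c*(((i:ℝ)+1)*((i:ℝ)+2))) := by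
        rw [div_sub_div _ _ (ne_of_gt hi) (ne_of_gt hi2)]; rw [div_mul_div_comm]
        congr 1 <;> ring
      rw [heq]
      apply div_le_div_of_nonneg_left one_pos.le (by positivity)
      push_cast
      nlinarith [sq_nonneg ((i:ℝ)+2)]
    have h2 : ∑ i ∈ Finset.range n, (1/c) * (1/((i:ℝ)+1) - 1/((i:ℝ)+2)) ≤ 1/c := by
      rw [← Finset.mul_sum]
      calc (1/c) * ∑ i ∈ Finset.range n, (1/((i:ℝ)+1) - 1/((i:ℝ)+2))
          ≤ (1/c) * 1 := mul_le_mul_of_nonneg_left (tele_sum' n) (by positivity)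
        _ = 1/c := mul_one _
    have h3 : 1/(1+c*((1+(0:ℕ) : ℕ):ℝ)^2) = 1/(1+c) := by norm_num
    rw [h3]
    linarith

private lemma offdiag_sum' (c : ℝ) (hc : 1 ≤ c) (m : ℕ) (j : Fin m) :
    ∑ k ∈ Finset.univ.erase j, 1/(1+c*((j:ℝ)-(k:ℝ))^2) ≤ 2*(1/(1+c) + 1/c) := by
  classical
  have hc0 : (0:ℝ) < c := lt_of_lt_of_le one_pos hc
  have hsplit : (Finset.univ.erase j : Finset (Fin m)) =
      (Finset.univ.filter (fun k : Fin m => (k:ℕ) < (j:ℕ))) ∪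
      (Finset.univ.filter (fun k : Fin m => (j:ℕ) < (k:ℕ))) := by
    ext k
    simp only [Finset.mem_erase, Finset.mem_union, Finset.mem_filter, Finset.mem_univ, true_and,
      and_true, Fin.ext_iff, ne_eq]
    omega
  have hdisj : Disjoint (Finset.univ.filter (fun k : Fin m => (k:ℕ) < (j:ℕ)))
      (Finset.univ.filter (fun k : Fin m => (j:ℕ) < (k:ℕ))) := by
    rw [Finset.disjoint_left]
    intro k hk1 hk2
    simp only [Finset.mem_filter] at hk1 hk2
    omega
  rw [hsplit, Finset.sum_union hdisj]
  have hlt : ∑ k ∈ Finset.univ.filter (fun k : Fin m => (k:ℕ) < (j:ℕ)),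
      1/(1+c*((j:ℝ)-(k:ℝ))^2)
      = ∑ i ∈ Finset.range (j:ℕ), 1/(1+c*((1+i : ℕ):ℝ)^2) := by
    refine Finset.sum_bij' (fun k _ => (j:ℕ) - (k:ℕ) - 1)
      (fun i hi => (⟨(j:ℕ) - i - 1, by
        simp only [Finset.mem_range] at hi; have := j.isLt; omega⟩ : Fin m))
      ?_ ?_ ?_ ?_ ?_
    · intro k hk
      simp only [Finset.mem_filter, Finset.mem_univ, true_and] at hk
      simp only [Finset.mem_range]; omega
    · intro i hi
      simp only [Finset.mem_range] at hi
      simp only [Finset.mem_filter, Finset.mem_univ, true_and]; omega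
    · intro k hk
      simp only [Finset.mem_filter, Finset.mem_univ, true_and] at hk
      apply Fin.ext; simp; omega
    · intro i hi
      simp only [Finset.mem_range] at hi
      simp; omega
    · intro k hk
      simp only [Finset.mem_filter, Finset.mem_univ, true_and] at hk
      congr 2
      have h2 : (1 + ((j:ℕ) - (k:ℕ) - 1) : ℕ) = (j:ℕ) - (k:ℕ) := by omega
      rw [h2, Nat.cast_sub (le_of_lt hk)]
  have hgt : ∑ k ∈ Finset.univ.filter (fun k : Fin m => (j:ℕ) < (k:ℕ)),
      1/(1+c*((j:ℝ)-(k:ℝ))^2)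
      = ∑ i ∈ Finset.range (m - (j:ℕ) - 1), 1/(1+c*((1+i : ℕ):ℝ)^2) := by
    refine Finset.sum_bij' (fun k _ => (k:ℕ) - (j:ℕ) - 1)
      (fun i hi => (⟨(j:ℕ) + i + 1, by
        simp only [Finset.mem_range] at hi; omega⟩ : Fin m))
      ?_ ?_ ?_ ?_ ?_
    · intro k hk
      simp only [Finset.mem_filter, Finset.mem_univ, true_and] at hk
      simp only [Finset.mem_range]
      have := k.isLt; omega
    · intro i hi
      simp only [Finset.mem_range] at hi
      simp only [Finset.mem_filter, Finset.mem_univ, true_and]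
      omega
    · intro k hk
      simp only [Finset.mem_filter, Finset.mem_univ, true_and] at hk
      apply Fin.ext; simp; omega
    · intro i hi
      simp only [Finset.mem_range] at hi
      simp; omega
    · intro k hk
      simp only [Finset.mem_filter, Finset.mem_univ, true_and] at hk
      congr 2
      have h2 : (1 + ((k:ℕ) - (j:ℕ) - 1) : ℕ) = (k:ℕ) - (j:ℕ) := by omega
      rw [h2, Nat.cast_sub (le_of_lt hk)]
      ring
  rw [hlt, hgt]
  have b1 := tele' c hc (j:ℕ)
  have b2 := tele' c hc (m - (j:ℕ) - 1)
  linarith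

end Aux

set_option maxHeartbeats 1000000 in
/-- For `m ≥ 2` with the S4D-Lin initialization `v_j = π j`,
`w_j = -1/2 + i v_j`, the Gram matrix `G_{j,k} = ∫₀^∞ Re(e^{w_j s}) Re(e^{w_k s}) ds` satisfies
`0.2 < λ_min(G) ≤ λ_max(G) < √2`; in particular, the condition number `λ_max(G)/λ_min(G)` is
bounded above uniformly in `m` (by `√2 / 0.2`). -/
theorem stmt_10 (m : ℕ) (hm : 2 ≤ m)
    (v : Fin m → ℝ) (hv : ∀ j, v j = π * ((j : ℕ) + 1))
    (G : Matrix (Fin m) (Fin m) ℝ)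
    (hG : ∀ j k, G j k = ∫ s in Set.Ioi (0 : ℝ),
      (Complex.exp (((-(1/2) : ℝ) + (v j : ℂ) * Complex.I) * (s : ℂ))).re *
      (Complex.exp (((-(1/2) : ℝ) + (v k : ℂ) * Complex.I) * (s : ℂ))).re)
    (hHerm : G.IsHermitian) :
    (0.2 < ⨅ i, hHerm.eigenvalues i) ∧
    (⨅ i, hHerm.eigenvalues i) ≤ (⨆ i, hHerm.eigenvalues i) ∧
    ((⨆ i, hHerm.eigenvalues i) < Real.sqrt 2) ∧
    ((⨆ i, hHerm.eigenvalues i) / (⨅ i, hHerm.eigenvalues i) < Real.sqrt 2 / 0.2) := by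
  classical
  have hπ : (3.14 : ℝ) < π := by linarith [Real.pi_gt_d6]
  have hπpos : (0:ℝ) < π := by linarith
  set c : ℝ := π^2 with hcdef
  have hc : (9.85:ℝ) < c := by nlinarith
  have hc1 : (1:ℝ) ≤ c := by linarith
  have hc0 : (0:ℝ) < c := by linarith
  have hentry : ∀ j k, G j k = 1/2*(1/(1+(v j - v k)^2)) + 1/2*(1/(1+(v j + v k)^2)) :=
    fun j k => (hG j k).trans (gram_integral' (v j) (v k))
  have hvlb : ∀ j, π ≤ v j := by
    intro j
    rw [hv j]
    nlinarith [Nat.cast_nonneg (α := ℝ) (j:ℕ)]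
  have hGpos : ∀ j k, 0 < G j k := by
    intro j k
    rw [hentry]
    positivity
  have hdiag_lb : ∀ j, (1:ℝ)/2 < G j j := by
    intro j
    rw [hentry, sub_self]
    have h2 : (0:ℝ) < 1/2*(1/(1+(v j + v j)^2)) := by positivity
    have h3 : 1/2*(1/(1+(0:ℝ)^2)) = 1/2 := by norm_num
    rw [h3]
    linarith
  have hdiag_ub : ∀ j, G j j ≤ 1/2 + 1/2 * (1/(1+4*c)) := by
    intro j
    rw [hentry, sub_self]
    have h4 : 4*c ≤ (v j + v j)^2 := by nlinarith [hvlb j]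
    have h5 : 1/(1+(v j + v j)^2) ≤ 1/(1+4*c) :=
      one_div_le_one_div_of_le (by linarith) (by linarith)
    have h3 : 1/2*(1/(1+(0:ℝ)^2)) = 1/2 := by norm_num
    rw [h3]
    linarith
  have hrow : ∀ j, ∑ k ∈ Finset.univ.erase j, |G j k| ≤ 1/(1+c) + 1/c + 1/(2*c) := by
    intro j
    have hstep : ∀ k, |G j k| = 1/2*(1/(1+c*((j:ℝ)-(k:ℝ))^2)) + 1/2*(1/(1+(v j + v k)^2)) := by
      intro k
      rw [abs_of_pos (hGpos j k), hentry]
      congr 3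
      rw [hv j, hv k]
      ring
    have hA : ∑ k ∈ Finset.univ.erase j, 1/2*(1/(1+c*((j:ℝ)-(k:ℝ))^2)) ≤ 1/(1+c) + 1/c := by
      rw [← Finset.mul_sum]
      calc 1/2 * ∑ k ∈ Finset.univ.erase j, 1/(1+c*((j:ℝ)-(k:ℝ))^2)
          ≤ 1/2 * (2*(1/(1+c) + 1/c)) :=
            mul_le_mul_of_nonneg_left (offdiag_sum' c hc1 m j) (by norm_num)
        _ = 1/(1+c) + 1/c := by ring
    have hB : ∑ k ∈ Finset.univ.erase j, 1/2*(1/(1+(v j + v k)^2)) ≤ 1/(2*c) := by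
      have hsub : ∑ k ∈ Finset.univ.erase j, 1/2*(1/(1+(v j + v k)^2))
          ≤ ∑ k : Fin m, 1/2*(1/(1+(v j + v k)^2)) :=
        Finset.sum_le_sum_of_subset_of_nonneg (Finset.subset_univ _)
          (fun k _ _ => by positivity)
      have hterm : ∀ k : Fin m, 1/2*(1/(1+(v j + v k)^2))
          ≤ (1/(2*c)) * (1/((k:ℝ)+1) - 1/((k:ℝ)+2)) := by
        intro k
        have hk1 : (0:ℝ) < (k:ℝ)+1 := by positivity
        have hk2 : (0:ℝ) < (k:ℝ)+2 := by positivity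
        have heq : (1/(2*c)) * (1/((k:ℝ)+1) - 1/((k:ℝ)+2))
            = 1/2 * (1/(c*(((k:ℝ)+1)*((k:ℝ)+2)))) := by
          rw [div_sub_div _ _ (ne_of_gt hk1) (ne_of_gt hk2)]
          rw [div_mul_div_comm, div_mul_div_comm]
          congr 1 <;> ring
        rw [heq]
        have hvk : π*((k:ℝ)+2) ≤ v j + v k := by
          rw [hv j, hv k]
          nlinarith [Nat.cast_nonneg (α := ℝ) (j:ℕ)]
        have h6 : c*(((k:ℝ)+1)*((k:ℝ)+2)) ≤ 1+(v j + v k)^2 := by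
          have hsq : (π*((k:ℝ)+2))^2 ≤ (v j + v k)^2 := by
            have hp2 : (0:ℝ) ≤ π*((k:ℝ)+2) := by positivity
            nlinarith [hvk, hp2]
          have hexp : (π*((k:ℝ)+2))^2 = c*(((k:ℝ)+2)*((k:ℝ)+2)) := by
            rw [hcdef]; ring
          nlinarith [hsq, hexp, hk1, hk2, hc0]
        have h7 := one_div_le_one_div_of_le (by positivity) h6
        linarith
      calc ∑ k ∈ Finset.univ.erase j, 1/2*(1/(1+(v j + v k)^2))
          ≤ ∑ k : Fin m, (1/(2*c)) * (1/((k:ℝ)+1) - 1/((k:ℝ)+2)) :=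
            hsub.trans (Finset.sum_le_sum (fun k _ => hterm k))
        _ = (1/(2*c)) * ∑ i ∈ Finset.range m, (1/((i:ℝ)+1) - 1/((i:ℝ)+2)) := by
            rw [← Finset.mul_sum,
              Fin.sum_univ_eq_sum_range (fun i : ℕ => (1/((i:ℝ)+1) - 1/((i:ℝ)+2)))]
        _ ≤ (1/(2*c)) * 1 := mul_le_mul_of_nonneg_left (tele_sum' m) (by positivity)
        _ = 1/(2*c) := mul_one _
    calc ∑ k ∈ Finset.univ.erase j, |G j k|
        = ∑ k ∈ Finset.univ.erase j,
            (1/2*(1/(1+c*((j:ℝ)-(k:ℝ))^2)) + 1/2*(1/(1+(v j + v k)^2))) :=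
          Finset.sum_congr rfl (fun k _ => hstep k)
      _ = (∑ k ∈ Finset.univ.erase j, 1/2*(1/(1+c*((j:ℝ)-(k:ℝ))^2)))
          + ∑ k ∈ Finset.univ.erase j, 1/2*(1/(1+(v j + v k)^2)) := Finset.sum_add_distrib
      _ ≤ 1/(1+c) + 1/c + 1/(2*c) := by linarith
  -- eigenvalues via Gershgorin
  have hev : ∀ i, Module.End.HasEigenvalue (Matrix.toLin' G) (hHerm.eigenvalues i) := by
    intro i
    have hmul := hHerm.mulVec_eigenvectorBasis i
    have hnz0 := hHerm.eigenvectorBasis.orthonormal.ne_zero i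
    refine Module.End.hasEigenvalue_of_hasEigenvector
      (x := (WithLp.equiv 2 (Fin m → ℝ)) (hHerm.eigenvectorBasis i))
      ⟨Module.End.mem_eigenspace_iff.mpr ?_, ?_⟩
    · rw [Matrix.toLin'_apply]; exact hmul
    · intro h
      apply hnz0
      have h2 := congrArg (WithLp.equiv 2 (Fin m → ℝ)).symm h
      simpa using h2
  have hRc : 1/(1+c) + 1/c + 1/(2*c) ≤ 0.245 := by
    have e1 : 1/(1+c) ≤ 1/10.85 := one_div_le_one_div_of_le (by norm_num) (by linarith)
    have e2 : 1/c ≤ 1/9.85 := one_div_le_one_div_of_le (by norm_num) (by linarith)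
    have e3 : 1/(2*c) ≤ 1/19.7 := one_div_le_one_div_of_le (by norm_num) (by linarith)
    norm_num at e1 e2 e3 ⊢
    linarith
  have hub2 : 1/2 * (1/(1+4*c)) ≤ 0.0124 := by
    have : 1/(1+4*c) ≤ 1/40.4 := one_div_le_one_div_of_le (by norm_num) (by linarith)
    norm_num at this ⊢
    linarith
  have hbound : ∀ i, 0.255 < hHerm.eigenvalues i ∧ hHerm.eigenvalues i < 0.76 := by
    intro i
    obtain ⟨k, hk⟩ := eigenvalue_mem_ball (hev i)
    rw [Metric.mem_closedBall, Real.dist_eq] at hk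
    simp only [Real.norm_eq_abs] at hk
    have hk2 := hk.trans (hrow k)
    have habs := abs_le.mp hk2
    have h1 := hdiag_lb k
    have h2 := hdiag_ub k
    constructor
    · linarith [habs.1, hRc, h1]
    · linarith [habs.2, hRc, hub2, h2]
  haveI : Nonempty (Fin m) := ⟨⟨0, by omega⟩⟩
  have hbdd : BddAbove (Set.range hHerm.eigenvalues) := Set.Finite.bddAbove (Set.finite_range _)
  have hbddb : BddBelow (Set.range hHerm.eigenvalues) := Set.Finite.bddBelow (Set.finite_range _)
  have hinf : (0.255:ℝ) ≤ ⨅ i, hHerm.eigenvalues i := le_ciInf (fun i => (hbound i).1.le)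
  have hsup : (⨆ i, hHerm.eigenvalues i) ≤ 0.76 := ciSup_le (fun i => (hbound i).2.le)
  have hinfsup : (⨅ i, hHerm.eigenvalues i) ≤ ⨆ i, hHerm.eigenvalues i := by
    obtain ⟨i⟩ := ‹Nonempty (Fin m)›
    exact (ciInf_le hbddb i).trans (le_ciSup hbdd i)
  have hsqrt : (0.76:ℝ) < Real.sqrt 2 := by
    have h14 : (1.4:ℝ) ≤ Real.sqrt 2 := by
      rw [show (1.4:ℝ) = Real.sqrt (1.96) by
        rw [show (1.96:ℝ) = 1.4^2 by norm_num]
        exact (Real.sqrt_sq (by norm_num)).symm]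
      exact Real.sqrt_le_sqrt (by norm_num)
    linarith
  have hinf02 : (0.2:ℝ) < ⨅ i, hHerm.eigenvalues i := by
    calc (0.2:ℝ) < 0.255 := by norm_num
      _ ≤ _ := hinf
  have hsup_lt : (⨆ i, hHerm.eigenvalues i) < Real.sqrt 2 := lt_of_le_of_lt hsup hsqrt
  refine ⟨hinf02, hinfsup, hsup_lt, ?_⟩
  have hsupnn : (0:ℝ) ≤ ⨆ i, hHerm.eigenvalues i := by linarith
  calc (⨆ i, hHerm.eigenvalues i) / (⨅ i, hHerm.eigenvalues i)
      ≤ (⨆ i, hHerm.eigenvalues i) / 0.2 := by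
        gcongr
    _ < Real.sqrt 2 / 0.2 := by
        exact (div_lt_div_iff_of_pos_right (by norm_num)).mpr hsup_lt
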